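/- Let A, P, Q ∈ M_n(ℝ) with P and Q symmetric, B an n × m real matrix, R ∈ M_m(ℝ) symmetric, and suppose S := R + BᵀPB is symmetric positive definite and the Riccati-type inequality AᵀPA − P + Q − AᵀPB S⁻¹ BᵀPA ⪰ 0 holds. Let K be an m × n real matrix such that there exist c ≥ 0 and 0 ≤ λ < 1 with ‖(A + BK)ᵗ‖ ≤ c·λᵗ for all natural numbers t (operator norm). Then for every x₀ ∈ ℝⁿ, with xᵗ := (A + BK)ᵗ x₀, the quadratic cost satisfies x₀ᵀ P x₀ ≤ Σ_{t=0}^{∞} (xᵗ)ᵀ (Q + KᵀRK) xᵗ; that is, x₀ᵀ P x₀ is a lower bound on the LQR cost-to-go achieved by any exponentially stabilizing state-feedback gain K. -/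

import Mathlib

open Matrix
open scoped Matrix.Norms.L2Operator

/-- If `S := R + BᵀPB` is symmetric positive definite, the Riccati-type inequality
`AᵀPA − P + Q − AᵀPB S⁻¹ BᵀPA ⪰ 0` holds, and `K` exponentially stabilizes the closed loop
(`‖(A+BK)ᵗ‖ ≤ c·λᵗ` in operator norm, `0 ≤ c`, `0 ≤ λ < 1`), then for every `x₀`, with
`xᵗ := (A+BK)ᵗ x₀`, the LQR cost satisfies `x₀ᵀPx₀ ≤ Σₜ (xᵗ)ᵀ(Q + KᵀRK)xᵗ`. -/
theorem stmt12 (n m : ℕ) (A P Q : Matrix (Fin n) (Fin n) ℝ)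
    (B : Matrix (Fin n) (Fin m) ℝ) (R : Matrix (Fin m) (Fin m) ℝ)
    (hP : Pᵀ = P) (hQ : Qᵀ = Q) (hR : Rᵀ = R)
    (hS : (R + Bᵀ * P * B).PosDef)
    (hRic : (Aᵀ * P * A - P + Q -
      Aᵀ * P * B * (R + Bᵀ * P * B)⁻¹ * (Bᵀ * P * A)).PosSemidef)
    (K : Matrix (Fin m) (Fin n) ℝ)
    (c lam : ℝ) (hc : 0 ≤ c) (hlam0 : 0 ≤ lam) (hlam1 : lam < 1)
    (hstab : ∀ t : ℕ, ‖(A + B * K) ^ t‖ ≤ c * lam ^ t) :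
    ∀ x₀ : Fin n → ℝ,
      x₀ ⬝ᵥ (P *ᵥ x₀) ≤
        ∑' t : ℕ, ((A + B * K) ^ t *ᵥ x₀) ⬝ᵥ
          ((Q + Kᵀ * R * K) *ᵥ ((A + B * K) ^ t *ᵥ x₀)) := by
  intro x₀
  set S := R + Bᵀ * P * B with hSdef
  set L := A + B * K with hLdef
  set M := Q + Kᵀ * R * K with hMdef
  -- Step 1: PSD of D := M + LᵀPL - P
  have hD : (M + Lᵀ * P * L - P).PosSemidef := by
    have hdet : IsUnit S.det := isUnit_iff_ne_zero.mpr hS.det_pos.ne'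
    have hSt : Sᵀ = S := by simp [hSdef, transpose_add, transpose_mul, hP, hR, Matrix.mul_assoc]
    have hinv : S * S⁻¹ = 1 := Matrix.mul_nonsing_inv _ hdet
    have hinv' : S⁻¹ * S = 1 := Matrix.nonsing_inv_mul _ hdet
    have hSit : (S⁻¹)ᵀ = S⁻¹ := by rw [Matrix.transpose_nonsing_inv, hSt]
    set N := K + S⁻¹ * (Bᵀ * P * A) with hNdef
    have hNt : Nᴴ = Kᵀ + Aᵀ * P * B * S⁻¹ := by
      simp [hNdef, conjTranspose_add, conjTranspose_mul, Matrix.transpose_mul, hP, hSit,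
        Matrix.mul_assoc]
    have hNSN : (Nᴴ * S * N).PosSemidef := hS.posSemidef.conjTranspose_mul_mul_same N
    have key : M + Lᵀ * P * L - P
        = (Aᵀ * P * A - P + Q - Aᵀ * P * B * S⁻¹ * (Bᵀ * P * A)) + Nᴴ * S * N := by
      have hSN : S * N = S * K + Bᵀ * P * A := by
        rw [hNdef, Matrix.mul_add, ← Matrix.mul_assoc, hinv, Matrix.one_mul]
      have e1 : Nᴴ * S * N = Nᴴ * (S * N) := by rw [Matrix.mul_assoc]
      rw [hMdef, hLdef, e1, hSN, hNt]
      have e2 : Aᵀ * P * B * S⁻¹ * (S * K) = Aᵀ * P * B * K := by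
        rw [← Matrix.mul_assoc, Matrix.mul_assoc (Aᵀ * P * B) S⁻¹ S, hinv', Matrix.mul_one]
      simp only [Matrix.add_mul, Matrix.mul_add]
      rw [e2]
      simp only [hSdef, Matrix.mul_add, Matrix.add_mul, transpose_add, transpose_mul,
        Matrix.mul_assoc]
      abel
    exact key ▸ hRic.add hNSN
  -- notation for trajectory
  set x : ℕ → (Fin n → ℝ) := fun t => L ^ t *ᵥ x₀ with hx
  set f : ℕ → ℝ := fun t => x t ⬝ᵥ (M *ᵥ x t) with hf
  set g : ℕ → ℝ := fun t => x t ⬝ᵥ (P *ᵥ x t) with hg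
  -- Step 2: per-step inequality g t ≤ f t + g (t+1)
  have step : ∀ t : ℕ, g t ≤ f t + g (t + 1) := by
    intro t
    have h0 := hD.dotProduct_mulVec_nonneg (x t)
    have hst : star (x t) = x t := rfl
    rw [hst] at h0
    have expand : x t ⬝ᵥ ((M + Lᵀ * P * L - P) *ᵥ x t)
        = f t + g (t + 1) - g t := by
      have hx1 : x (t + 1) = L *ᵥ x t := by
        simp only [hx]
        rw [pow_succ', ← Matrix.mulVec_mulVec]
      simp only [Matrix.sub_mulVec, Matrix.add_mulVec, dotProduct_add, dotProduct_sub,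
        hf, hg, hx1]
      have : x t ⬝ᵥ ((Lᵀ * P * L) *ᵥ x t) = (L *ᵥ x t) ⬝ᵥ (P *ᵥ (L *ᵥ x t)) := by
        rw [← Matrix.mulVec_mulVec, ← Matrix.mulVec_mulVec, Matrix.dotProduct_mulVec,
          Matrix.vecMul_transpose]
      rw [this]
    rw [expand] at h0
    linarith
  -- Step 3: partial sums bound
  have partial_bound : ∀ Nn : ℕ, g 0 ≤ (∑ t ∈ Finset.range Nn, f t) + g Nn := by
    intro Nn
    induction Nn with
    | zero => simp
    | succ k ih =>
      rw [Finset.sum_range_succ]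
      have := step k
      linarith
  -- Euclidean norm facts
  have normx : ∀ t : ℕ, ‖(WithLp.equiv 2 (Fin n → ℝ)).symm (x t)‖
      ≤ (c * ‖(WithLp.equiv 2 (Fin n → ℝ)).symm x₀‖) * lam ^ t := by
    intro t
    have h1 : ‖(WithLp.equiv 2 (Fin n → ℝ)).symm ((L ^ t) *ᵥ x₀)‖
        ≤ ‖L ^ t‖ * ‖(WithLp.equiv 2 (Fin n → ℝ)).symm x₀‖ :=
      (L ^ t).l2_opNorm_mulVec ((WithLp.equiv 2 (Fin n → ℝ)).symm x₀)
    have h2 : ‖L ^ t‖ * ‖(WithLp.equiv 2 (Fin n → ℝ)).symm x₀‖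
        ≤ (c * lam ^ t) * ‖(WithLp.equiv 2 (Fin n → ℝ)).symm x₀‖ :=
      mul_le_mul_of_nonneg_right (hstab t) (norm_nonneg _)
    calc ‖(WithLp.equiv 2 (Fin n → ℝ)).symm (x t)‖
        ≤ ‖L ^ t‖ * ‖(WithLp.equiv 2 (Fin n → ℝ)).symm x₀‖ := h1
      _ ≤ (c * lam ^ t) * ‖(WithLp.equiv 2 (Fin n → ℝ)).symm x₀‖ := h2
      _ = (c * ‖(WithLp.equiv 2 (Fin n → ℝ)).symm x₀‖) * lam ^ t := by ring
  have quad_bound : ∀ (W : Matrix (Fin n) (Fin n) ℝ) (t : ℕ),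
      |x t ⬝ᵥ (W *ᵥ x t)| ≤ ‖W‖ * ((c * ‖(WithLp.equiv 2 (Fin n → ℝ)).symm x₀‖) ^ 2) * (lam ^ 2) ^ t := by
    intro W t
    set v := (WithLp.equiv 2 (Fin n → ℝ)).symm (x t) with hv
    have cs : |x t ⬝ᵥ (W *ᵥ x t)| ≤ ‖v‖ * ‖(WithLp.equiv 2 (Fin n → ℝ)).symm (W *ᵥ x t)‖ := by
      have := abs_real_inner_le_norm v ((WithLp.equiv 2 (Fin n → ℝ)).symm (W *ᵥ x t))
      simpa [hv, EuclideanSpace.inner_toLp_toLp, dotProduct_comm] using this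
    have hw : ‖(WithLp.equiv 2 (Fin n → ℝ)).symm (W *ᵥ x t)‖ ≤ ‖W‖ * ‖v‖ :=
      W.l2_opNorm_mulVec v
    have hvb : ‖v‖ ≤ (c * ‖(WithLp.equiv 2 (Fin n → ℝ)).symm x₀‖) * lam ^ t := normx t
    have hv0 : (0:ℝ) ≤ ‖v‖ := norm_nonneg _
    have hWn : (0:ℝ) ≤ ‖W‖ := norm_nonneg _
    have hsq : ‖v‖ ^ 2 ≤ ((c * ‖(WithLp.equiv 2 (Fin n → ℝ)).symm x₀‖) * lam ^ t) ^ 2 := by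
      nlinarith
    calc |x t ⬝ᵥ (W *ᵥ x t)| ≤ ‖v‖ * ‖(WithLp.equiv 2 (Fin n → ℝ)).symm (W *ᵥ x t)‖ := cs
      _ ≤ ‖v‖ * (‖W‖ * ‖v‖) := by nlinarith [hw]
      _ = ‖W‖ * ‖v‖ ^ 2 := by ring
      _ ≤ ‖W‖ * (((c * ‖(WithLp.equiv 2 (Fin n → ℝ)).symm x₀‖) * lam ^ t) ^ 2) :=
        mul_le_mul_of_nonneg_left hsq hWn
      _ = ‖W‖ * ((c * ‖(WithLp.equiv 2 (Fin n → ℝ)).symm x₀‖) ^ 2) * (lam ^ 2) ^ t := by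
        rw [← pow_mul, pow_mul']; ring
  have hlamsq : (0:ℝ) ≤ lam ^ 2 ∧ lam ^ 2 < 1 := by
    constructor
    · positivity
    · nlinarith
  -- Step 4: summability of f
  have hsummable : Summable f := by
    apply Summable.of_norm_bounded
      (g := fun t => ‖M‖ * ((c * ‖(WithLp.equiv 2 (Fin n → ℝ)).symm x₀‖) ^ 2) * (lam ^ 2) ^ t)
    · exact (summable_geometric_of_lt_one hlamsq.1 hlamsq.2).mul_left _
    · intro t
      simpa [Real.norm_eq_abs] using quad_bound M t
  -- Step 5: g N → 0
  have hgtendsto : Filter.Tendsto g Filter.atTop (nhds 0) := by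
    apply squeeze_zero_norm (fun t => quad_bound P t)
    have : Filter.Tendsto (fun t : ℕ => (lam ^ 2) ^ t) Filter.atTop (nhds 0) :=
      tendsto_pow_atTop_nhds_zero_of_lt_one hlamsq.1 hlamsq.2
    simpa using (this.const_mul (‖P‖ * ((c * ‖(WithLp.equiv 2 (Fin n → ℝ)).symm x₀‖) ^ 2)))
  -- Step 6: conclude
  have hpartial : Filter.Tendsto (fun Nn => (∑ t ∈ Finset.range Nn, f t) + g Nn)
      Filter.atTop (nhds ((∑' t, f t) + 0)) :=
    (hsummable.hasSum.tendsto_sum_nat).add hgtendsto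
  have hfinal : g 0 ≤ (∑' t, f t) + 0 :=
    le_of_tendsto_of_tendsto' tendsto_const_nhds hpartial partial_bound
  have hg0 : g 0 = x₀ ⬝ᵥ (P *ᵥ x₀) := by simp [hg, hx]
  rw [add_zero] at hfinal
  rw [← hg0]
  exact hfinal
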